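/- Let K = ℤ/2ℤ and let V be the K-vector space of finitely supported functions f : ℤ → K², with S : V → V the shift automorphism defined by (S f)(i) = f(i − 1). Let H₋ be the subspace of functions supported on {i ∈ ℤ : i ≤ 0} and H₊ the subspace of functions supported on {i ∈ ℤ : i ≥ 1}. Then for every natural number n, the quotient V / ((H₊ ∩ Sⁿ(H₊)) + (H₋ ∩ Sⁿ(H₋))) is finite dimensional of dimension exactly 2n. -/

import Mathlib

open Cardinal

/-- The `ZMod 2`-vector space of finitely supported functions `ℤ → (ZMod 2)²`. -/
abbrev Vsp : Type := ℤ →₀ (ZMod 2 × ZMod 2)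

/-- The subspace of functions supported on `{i : ℤ | i ≤ 0}`. -/
noncomputable def Hminus : Submodule (ZMod 2) Vsp :=
  Finsupp.supported (ZMod 2 × ZMod 2) (ZMod 2) {i : ℤ | i ≤ 0}

/-- The subspace of functions supported on `{i : ℤ | 1 ≤ i}`. -/
noncomputable def Hplus : Submodule (ZMod 2) Vsp :=
  Finsupp.supported (ZMod 2 × ZMod 2) (ZMod 2) {i : ℤ | 1 ≤ i}

section Aux

variable (S : Vsp ≃ₗ[ZMod 2] Vsp) (hS : ∀ (f : Vsp) (i : ℤ), S f i = f (i - 1))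

include hS

lemma shift_pow_apply (n : ℕ) (f : Vsp) (i : ℤ) :
    ((S : Vsp →ₗ[ZMod 2] Vsp) ^ n) f i = f (i - n) := by
  induction n generalizing i with
  | zero => simp
  | succ n ih =>
    rw [pow_succ']
    have : ((S : Vsp →ₗ[ZMod 2] Vsp) * (S : Vsp →ₗ[ZMod 2] Vsp) ^ n) f
        = S (((S : Vsp →ₗ[ZMod 2] Vsp) ^ n) f) := rfl
    rw [this, hS, ih]
    congr 1; push_cast; ring

lemma shift_symm_apply (f : Vsp) (i : ℤ) : S.symm f i = f (i + 1) := by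
  conv_rhs => rw [← S.apply_symm_apply f]
  rw [hS]; congr 1; ring

lemma shift_symm_pow_apply (n : ℕ) (f : Vsp) (i : ℤ) :
    ((S.symm : Vsp →ₗ[ZMod 2] Vsp) ^ n) f i = f (i + n) := by
  induction n generalizing i with
  | zero => simp
  | succ n ih =>
    rw [pow_succ']
    have : ((S.symm : Vsp →ₗ[ZMod 2] Vsp) * (S.symm : Vsp →ₗ[ZMod 2] Vsp) ^ n) f
        = S.symm (((S.symm : Vsp →ₗ[ZMod 2] Vsp) ^ n) f) := rfl
    rw [this, shift_symm_apply S hS, ih]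
    congr 1; push_cast; ring

lemma map_shift_pow_supported (n : ℕ) (t : Set ℤ) :
    Submodule.map ((S : Vsp →ₗ[ZMod 2] Vsp) ^ n)
      (Finsupp.supported (ZMod 2 × ZMod 2) (ZMod 2) t)
    = Finsupp.supported (ZMod 2 × ZMod 2) (ZMod 2) {i : ℤ | i - n ∈ t} := by
  ext f
  rw [Submodule.mem_map, Finsupp.mem_supported']
  constructor
  · rintro ⟨g, hg, rfl⟩ i hi
    rw [shift_pow_apply S hS]
    exact (Finsupp.mem_supported' _ _).1 hg _ hi
  · intro hf
    refine ⟨((S.symm : Vsp →ₗ[ZMod 2] Vsp) ^ n) f, ?_, ?_⟩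
    · rw [Finsupp.mem_supported']
      intro j hj
      rw [shift_symm_pow_apply S hS]
      exact hf _ (by simpa using hj)
    · apply Finsupp.ext
      intro i
      rw [shift_pow_apply S hS, shift_symm_pow_apply S hS]
      congr 1; ring

end Aux

set_option maxHeartbeats 1000000

/-- Let `S` be the shift automorphism of `V = (ZMod 2 × ZMod 2)`-valued finitely
supported functions on `ℤ`, `(S f) i = f (i - 1)`.  Then for every `n`, the
quotient `V / ((H₊ ∩ Sⁿ(H₊)) + (H₋ ∩ Sⁿ(H₋)))` is finite dimensional of
dimension exactly `2 * n`. -/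
theorem stmt11 (S : Vsp ≃ₗ[ZMod 2] Vsp)
    (hS : ∀ (f : Vsp) (i : ℤ), S f i = f (i - 1)) (n : ℕ) :
    FiniteDimensional (ZMod 2)
      (Vsp ⧸ ((Hplus ⊓ Submodule.map ((S : Vsp →ₗ[ZMod 2] Vsp) ^ n) Hplus)
            ⊔ (Hminus ⊓ Submodule.map ((S : Vsp →ₗ[ZMod 2] Vsp) ^ n) Hminus))) ∧
    Module.finrank (ZMod 2)
      (Vsp ⧸ ((Hplus ⊓ Submodule.map ((S : Vsp →ₗ[ZMod 2] Vsp) ^ n) Hplus)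
            ⊔ (Hminus ⊓ Submodule.map ((S : Vsp →ₗ[ZMod 2] Vsp) ^ n) Hminus)))
      = 2 * n := by
  classical
  set M := ZMod 2 × ZMod 2
  set s : Set ℤ := Set.Icc (1 : ℤ) (n : ℤ) with hs
  have hW : (Hplus ⊓ Submodule.map ((S : Vsp →ₗ[ZMod 2] Vsp) ^ n) Hplus)
      ⊔ (Hminus ⊓ Submodule.map ((S : Vsp →ₗ[ZMod 2] Vsp) ^ n) Hminus)
      = Finsupp.supported M (ZMod 2) sᶜ := by
    rw [Hplus, Hminus, map_shift_pow_supported S hS, map_shift_pow_supported S hS,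
      ← Finsupp.supported_inter, ← Finsupp.supported_inter, ← Finsupp.supported_union]
    congr 1
    ext i
    simp only [Set.mem_inter_iff, Set.mem_setOf_eq, Set.mem_union, Set.mem_compl_iff, hs,
      Set.mem_Icc]
    omega
  rw [hW]
  -- kernel of restriction to `s` is the functions supported on `sᶜ`
  have hker : LinearMap.ker (Finsupp.restrictDom M (ZMod 2) s)
      = Finsupp.supported M (ZMod 2) sᶜ := by
    ext f
    rw [LinearMap.mem_ker, Finsupp.mem_supported']
    constructor
    · intro h i hi
      have := congrArg (fun g : Finsupp.supported M (ZMod 2) s => (g : Vsp) i) h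
      simpa [Finsupp.restrictDom_apply, Finsupp.filter_apply,
        Set.notMem_compl_iff.1 hi] using this
    · intro h
      apply Subtype.ext
      apply Finsupp.ext
      intro i
      by_cases hi : i ∈ s
      · simpa [Finsupp.restrictDom_apply, Finsupp.filter_apply, hi] using
          h i (by simpa using hi)
      · simp [Finsupp.restrictDom_apply, Finsupp.filter_apply, hi]
  have hsurj : Function.Surjective (Finsupp.restrictDom M (ZMod 2) s) :=
    LinearMap.range_eq_top.1 (Finsupp.range_restrictDom s)
  let e1 := Submodule.quotEquivOfEq _ _ hker.symm
  let e2 := LinearMap.quotKerEquivOfSurjective (R := ZMod 2) (M := Vsp)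
    (M₂ := Finsupp.supported M (ZMod 2) s) (Finsupp.restrictDom M (ZMod 2) s) hsurj
  let e3 := Finsupp.supportedEquivFinsupp (M := M) (R := ZMod 2) s
  let e4 := Finsupp.linearEquivFunOnFinite (ZMod 2) M s
  let E := e1 ≪≫ₗ e2 ≪≫ₗ e3 ≪≫ₗ e4
  haveI : FiniteDimensional (ZMod 2) (s → M) := inferInstance
  haveI fd : FiniteDimensional (ZMod 2) (Vsp ⧸ Finsupp.supported M (ZMod 2) sᶜ) :=
    Module.Finite.equiv E.symm
  refine ⟨fd, ?_⟩
  rw [E.finrank_eq, Module.finrank_pi_fintype, Finset.sum_const, Finset.card_univ,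
    Module.finrank_prod, Module.finrank_self]
  have hcard : Fintype.card s = n := by
    rw [show (Fintype.card s) = Fintype.card (Set.Icc (1 : ℤ) (n : ℤ)) from rfl,
      Fintype.card_Icc, Int.card_Icc]
    omega
  rw [hcard, smul_eq_mul]
  omega
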